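/- Let p = 0. Let W := {(f,g) ∈ L × L : zʲ·f and z⁻ʲ·g are V-holomorphic}. Then the images of the pairs c_{rs} := (zˢuʳ, 0), for 0 ≤ r ≤ ⌊(j−2)/k⌋ and kr−j+1 ≤ s ≤ −1, form a ℂ-basis of the quotient vector space (L × L)/(ℂ[z,u]² + W). In particular this quotient (which computes H¹(Z_k; E) for the split bundle E = O(−j) ⊕ O(j)) has ℂ-dimension equal to the number of lattice points (r,s) with 0 ≤ r ≤ ⌊(j−2)/k⌋ and kr−j+1 ≤ s ≤ −1. -/

import Mathlib

noncomputable section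

/-- `L = ℂ[z,z⁻¹][u]`: Laurent polynomials in `z` with polynomial coefficients in `u`,
realised as the algebra of finitely supported ℂ-linear combinations of monomials on the
exponent monoid `ℤ × ℕ`, where `(s, r)` is the exponent of the monomial `zˢuʳ`. -/
abbrev L : Type := AddMonoidAlgebra ℂ (ℤ × ℕ)

/-- The monomial `zˢ` (`s ∈ ℤ`). -/
def zp (s : ℤ) : L := AddMonoidAlgebra.single (s, 0) 1

/-- The monomial `u`. -/
def uu : L := AddMonoidAlgebra.single (0, 1) 1

/-- `f` is V-holomorphic: every monomial `zˢuʳ` occurring in `f` satisfies `s ≤ k·r`,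
i.e. `f` is holomorphic in the coordinates `(z⁻¹, zᵏu)` of the chart `V` of `Z_k`. -/
def VHol (k : ℕ) (f : L) : Prop := ∀ (s : ℤ) (r : ℕ), f.coeff (s, r) ≠ 0 → s ≤ (k : ℤ) * r

/-- `f` lies in `ℂ[z,u] ⊆ L`, i.e. is holomorphic on the chart `U`. -/
def MemPolyRing (f : L) : Prop := ∀ (s : ℤ) (r : ℕ), f.coeff (s, r) ≠ 0 → 0 ≤ s

lemma zp_mul_apply (a s : ℤ) (r : ℕ) (f : L) : (zp a * f).coeff (s, r) = f.coeff (s - a, r) := by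
  have h := AddMonoidAlgebra.coeff_single_mul_eq_mul_coeff (x := f) (r := 1) (m := (a, 0)) (m₁ := (s, r)) (m₂ := (s - a, r)) ?_
  · simpa [zp] using h
  · intro b _
    constructor
    · intro hb
      have h1 : a + b.1 = s := congrArg Prod.fst hb
      have h2 : b.2 = r := by simpa using congrArg Prod.snd hb
      exact Prod.ext (by omega) h2
    · rintro rfl
      refine Prod.ext ?_ (by simp)
      show a + (s - a) = s
      ring

lemma single_apply_ne_zero' (a x : ℤ × ℕ) (c : ℂ) (h : (AddMonoidAlgebra.single a c).coeff x ≠ 0) :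
    x = a := by
  by_contra hx
  simp [AddMonoidAlgebra.coeff_single, Finsupp.single_apply, Ne.symm hx] at h

/-- For the split bundle (`p = 0`), the images of the canonical cocycles
`c_{rs} = (zˢuʳ, 0)`, for `0 ≤ r ≤ ⌊(j−2)/k⌋` and `kr−j+1 ≤ s ≤ −1`, form a ℂ-basis of the
Čech quotient `(L × L)/(ℂ[z,u]² + W)` computing `H¹(Z_k; O(−j) ⊕ O(j))`; in particular its
dimension is the number of such lattice points `(r,s)`. -/
theorem split_H1_basis (k : ℕ) (hk : 1 ≤ k) (j : ℕ) :
    let W : Set (L × L) :=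
      {x | VHol k (zp (j : ℤ) * x.1) ∧ VHol k (zp (-(j : ℤ)) * x.2)}
    let P : Set (L × L) := {x | MemPolyRing x.1 ∧ MemPolyRing x.2}
    let N : Submodule ℂ (L × L) := Submodule.span ℂ (P ∪ W)
    let I := {x : ℕ × ℤ //
      (x.1 : ℤ) ≤ ((j : ℤ) - 2) / k ∧ (k : ℤ) * x.1 - j + 1 ≤ x.2 ∧ x.2 ≤ -1}
    let e : I → (L × L) ⧸ N := fun i =>
      N.mkQ (AddMonoidAlgebra.single (i.val.2, i.val.1) (1 : ℂ), 0)
    LinearIndependent ℂ e ∧ Submodule.span ℂ (Set.range e) = ⊤ ∧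
      Module.finrank ℂ ((L × L) ⧸ N) = Nat.card I := by
  intro W P N I e
  have hk' : (0 : ℤ) < (k : ℤ) := by exact_mod_cast hk
  -- the linear functional reading the coefficient of z^s u^r in the first component
  set lam : ℤ × ℕ → (L × L) →ₗ[ℂ] ℂ :=
    fun m => (Finsupp.lapply m).comp ((AddMonoidAlgebra.coeffLinearEquiv ℂ).toLinearMap.comp (LinearMap.fst ℂ L L)) with hlam
  -- N is killed by lam (i.2, i.1) for i ∈ I
  have hNker : ∀ i : I, N ≤ LinearMap.ker (lam (i.val.2, i.val.1)) := by
    intro i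
    rw [Submodule.span_le]
    rintro x (hx | hx)
    · -- x ∈ P
      simp only [LinearMap.mem_ker, hlam, LinearMap.comp_apply, LinearMap.fst_apply,
        Finsupp.lapply_apply, LinearEquiv.coe_coe, AddMonoidAlgebra.coeffLinearEquiv_apply]
      by_contra h
      have := hx.1 i.val.2 i.val.1 h
      have := i.2.2.2
      omega
    · -- x ∈ W
      simp only [LinearMap.mem_ker, hlam, LinearMap.comp_apply, LinearMap.fst_apply,
        Finsupp.lapply_apply, LinearEquiv.coe_coe, AddMonoidAlgebra.coeffLinearEquiv_apply]
      by_contra h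
      have h1 : (zp (j : ℤ) * x.1).coeff (i.val.2 + j, i.val.1) ≠ 0 := by
        rw [zp_mul_apply]
        simpa using h
      have h2 := hx.1 (i.val.2 + j) i.val.1 h1
      have h3 := i.2.2.1
      omega
    -- descend to the quotient
  set lamQ : I → ((L × L) ⧸ N) →ₗ[ℂ] ℂ :=
    fun i => N.liftQ (lam (i.val.2, i.val.1)) (hNker i) with hlamQ
  have hdual : ∀ i i' : I, lamQ i (e i') = if i' = i then 1 else 0 := by
    intro i i'
    simp only [hlamQ, hlam]
    rw [show e i' = N.mkQ (AddMonoidAlgebra.single (i'.val.2, i'.val.1) (1 : ℂ), 0) from rfl]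
    rw [Submodule.mkQ_apply, Submodule.liftQ_apply]
    simp only [LinearMap.comp_apply, LinearMap.fst_apply, Finsupp.lapply_apply, LinearEquiv.coe_coe,
      AddMonoidAlgebra.coeffLinearEquiv_apply]
    show (AddMonoidAlgebra.single (i'.val.2, i'.val.1) (1 : ℂ)).coeff (i.val.2, i.val.1)
        = if i' = i then 1 else 0
    by_cases hii : i' = i
    · subst hii; simp [AddMonoidAlgebra.coeff_single, Finsupp.single_apply]
    · have hne : (i'.val.2, i'.val.1) ≠ (i.val.2, i.val.1) := by
        intro hc
        apply hii
        have h1 : i'.val.2 = i.val.2 := congrArg Prod.fst hc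
        have h2 : i'.val.1 = i.val.1 := congrArg Prod.snd hc
        exact Subtype.ext (Prod.ext h2 h1)
      simp [AddMonoidAlgebra.coeff_single, Finsupp.single_apply, hne, hii]
  -- linear independence
  have hli : LinearIndependent ℂ e := by
    rw [linearIndependent_iff']
    intro s g hsum i₀ hi₀
    have := congrArg (lamQ i₀) hsum
    rw [map_sum, map_zero] at this
    simp only [map_smul, hdual, smul_eq_mul] at this
    rw [Finset.sum_congr rfl (fun i _ => by
      rw [show g i * (if i = i₀ then (1:ℂ) else 0) = if i = i₀ then g i else 0 by
        split_ifs <;> ring])] at this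
    rwa [Finset.sum_ite_eq' s i₀ g, if_pos hi₀] at this
  -- every second-component pair lies in N
  have hsnd : ∀ g : L, ((0 : L), g) ∈ N := by
    intro g
    induction g using AddMonoidAlgebra.induction_linear with
    | zero => exact N.zero_mem
    | add f g hf hg =>
      have : ((0 : L), f + g) = ((0 : L), f) + ((0 : L), g) := by simp
      rw [this]; exact N.add_mem hf hg
    | single a c =>
      rcases a with ⟨s, r⟩
      by_cases hs : 0 ≤ s
      · refine Submodule.subset_span (Or.inl ⟨?_, ?_⟩)
        · intro s' r' h; simp at h
        · intro s' r' h
          have := single_apply_ne_zero' _ _ _ h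
          have h1 : s' = s := congrArg Prod.fst this
          omega
      · refine Submodule.subset_span (Or.inr ⟨?_, ?_⟩)
        · intro s' r' h; simp at h
        · intro s' r' h
          rw [zp_mul_apply] at h
          have := single_apply_ne_zero' _ _ _ h
          have h1 : s' - -(j : ℤ) = s := congrArg Prod.fst this
          have : (0 : ℤ) ≤ (k : ℤ) * r' := by positivity
          omega
  -- spanning
  have hspan1 : ∀ f : L, N.mkQ (f, (0 : L)) ∈ Submodule.span ℂ (Set.range e) := by
    intro f
    induction f using AddMonoidAlgebra.induction_linear with
    | zero => change N.mkQ (0 : L × L) ∈ _; rw [map_zero]; exact Submodule.zero_mem _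
    | add f g hf hg =>
      have : N.mkQ ((f + g : L), (0 : L)) = N.mkQ (f, 0) + N.mkQ (g, 0) := by
        rw [← map_add]; norm_num
      rw [this]; exact Submodule.add_mem _ hf hg
    | single a c =>
      rcases a with ⟨s, r⟩
      by_cases hs : 0 ≤ s
      · have hmem : ((AddMonoidAlgebra.single ((s : ℤ), r) c : L), (0 : L)) ∈ N := by
          refine Submodule.subset_span (Or.inl ⟨?_, ?_⟩)
          · intro s' r' h
            have := single_apply_ne_zero' _ _ _ h
            have h1 : s' = s := congrArg Prod.fst this
            omega
          · intro s' r' h; simp at h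
        rw [show N.mkQ (AddMonoidAlgebra.single ((s : ℤ), r) c, (0 : L)) = 0 from
          (Submodule.Quotient.mk_eq_zero N).2 hmem]
        exact Submodule.zero_mem _
      · by_cases hs2 : s ≤ (k : ℤ) * r - j
        · have hmem : ((AddMonoidAlgebra.single ((s : ℤ), r) c : L), (0 : L)) ∈ N := by
            refine Submodule.subset_span (Or.inr ⟨?_, ?_⟩)
            · intro s' r' h
              rw [zp_mul_apply] at h
              have := single_apply_ne_zero' _ _ _ h
              have h1 : s' - (j : ℤ) = s := congrArg Prod.fst this
              have h2 : r' = r := congrArg Prod.snd this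
              subst h2
              omega
            · intro s' r' h; simp at h
          rw [show N.mkQ (AddMonoidAlgebra.single ((s : ℤ), r) c, (0 : L)) = 0 from
            (Submodule.Quotient.mk_eq_zero N).2 hmem]
          exact Submodule.zero_mem _
        · push_neg at hs hs2
          have hkr : (k : ℤ) * r ≤ (j : ℤ) - 2 := by omega
          have hi1 : (r : ℤ) ≤ ((j : ℤ) - 2) / k := by
            rw [Int.le_ediv_iff_mul_le hk']
            calc (r : ℤ) * k = (k : ℤ) * r := by ring
            _ ≤ (j : ℤ) - 2 := hkr
          set i : I := ⟨(r, s), hi1, (by omega : (k : ℤ) * r - j + 1 ≤ s), (by omega : s ≤ -1)⟩ with hi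
          have hrw : ((AddMonoidAlgebra.single ((s : ℤ), r) c : L), (0 : L))
              = c • ((AddMonoidAlgebra.single ((s : ℤ), r) (1 : ℂ) : L), (0 : L)) := by
            rw [Prod.smul_mk]
            congr 1
            · rw [AddMonoidAlgebra.smul_single, smul_eq_mul, mul_one]
            · simp
          rw [hrw, map_smul]
          exact Submodule.smul_mem _ _ (Submodule.subset_span ⟨i, rfl⟩)
  have hspan : Submodule.span ℂ (Set.range e) = ⊤ := by
    rw [eq_top_iff]
    rintro q -
    obtain ⟨x, rfl⟩ := N.mkQ_surjective q
    have hx : x = (x.1, (0 : L)) + ((0 : L), x.2) := by simp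
    rw [hx, map_add]
    refine Submodule.add_mem _ (hspan1 x.1) ?_
    rw [show N.mkQ ((0 : L), x.2) = 0 from (Submodule.Quotient.mk_eq_zero N).2 (hsnd x.2)]
    exact Submodule.zero_mem _
  refine ⟨hli, hspan, ?_⟩
  have b : Module.Basis I ℂ ((L × L) ⧸ N) := Module.Basis.mk hli (by rw [hspan])
  exact Module.finrank_eq_nat_card_basis b
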